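/- Assume m ≥ 3 and m divides q−1, and set c := (q−1)/m. Let z_0, z_1, …, z_{c+1} be variables and let ev : F[z_0, …, z_{c+1}] → R be the F-algebra homomorphism with ev(z_0) = 1, ev(z_1) = x, and ev(z_{1+u}) = y^u for 1 ≤ u ≤ c (the images forming the basis of L(q)). Then ev maps the F-space of homogeneous polynomials of degree 2 in z_0, …, z_{c+1} onto L(2q), and the kernel of this restricted linear map has F-dimension binom(c+3, 2) − 3c − 3. (Geometrically: X_f ⊆ P^{c+1} is contained in exactly binom(c+3,2) − 3c − 3 linearly independent quadric hypersurfaces.) -/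

import Mathlib

open Polynomial

noncomputable section

/-- The affine coordinate ring `R = F[x][y]/(y^q + y - f(x))` of the
Artin-Schreier curve `y^q + y = f(x)`, as a quotient of `F[x][y]`. -/
abbrev ASRing (F : Type*) [Field F] (q : ℕ) (f : F[X]) : Type _ :=
  AdjoinRoot ((X : (F[X])[X]) ^ q + X - C f)

/-- The image of `x` in `R`. -/
def ASx (F : Type*) [Field F] (q : ℕ) (f : F[X]) : ASRing F q f :=
  AdjoinRoot.of _ X

/-- The image of `y` in `R`. -/
def ASy (F : Type*) [Field F] (q : ℕ) (f : F[X]) : ASRing F q f :=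
  AdjoinRoot.root _

/-- `L(s)`: the `F`-linear span in `R` of the monomials `x^i * y^j` with
`i ≥ 0`, `0 ≤ j ≤ q - 1` and `q*i + m*j ≤ s`. -/
def Lspace (F : Type*) [Field F] (q : ℕ) (f : F[X]) (m s : ℕ) :
    Submodule F (ASRing F q f) :=
  Submodule.span F {r | ∃ i j : ℕ, j ≤ q - 1 ∧ q * i + m * j ≤ s ∧
    r = ASx F q f ^ i * ASy F q f ^ j}

/- ### Auxiliary lemmas -/

lemma aux_degree_two_decomp {σ : Type*} (d : σ →₀ ℕ) (h : d.degree = 2) :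
    ∃ a b, d = Finsupp.single a 1 + Finsupp.single b 1 := by
  classical
  have hcard : Multiset.card d.toMultiset = 2 := by
    rw [Finsupp.card_toMultiset]; exact h
  obtain ⟨a, b, hab⟩ := Multiset.card_eq_two.mp hcard
  refine ⟨a, b, ?_⟩
  have h2 := congrArg Multiset.toFinsupp hab
  rw [Finsupp.toMultiset_toFinsupp] at h2
  rw [h2, show ({a, b} : Multiset σ) = {a} + {b} by
    rw [Multiset.insert_eq_cons, Multiset.singleton_add],
    Multiset.toFinsupp_add, Multiset.toFinsupp_singleton, Multiset.toFinsupp_singleton]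

/-- The degree-`2` multi-indices on `Fin N` are in bijection with `Sym (Fin N) 2`. -/
def auxDegTwoEquiv (N : ℕ) : {d : Fin N →₀ ℕ // d.degree = 2} ≃ Sym (Fin N) 2 where
  toFun d := ⟨d.1.toMultiset, by rw [Finsupp.card_toMultiset]; exact d.2⟩
  invFun m := ⟨Multiset.toFinsupp m.1, by
    have h2 := Finsupp.card_toMultiset (Multiset.toFinsupp (↑m : Multiset (Fin N)))
    rw [Multiset.toFinsupp_toMultiset] at h2
    exact h2.symm.trans m.2⟩
  left_inv d := by ext1; exact Finsupp.toMultiset_toFinsupp _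
  right_inv m := by ext1; exact Multiset.toFinsupp_toMultiset _

instance auxDegTwoFintype (N : ℕ) : Fintype {d : Fin N →₀ ℕ // d.degree = 2} :=
  Fintype.ofEquiv _ (auxDegTwoEquiv N).symm

lemma aux_card_degree_two (N : ℕ) :
    Fintype.card {d : Fin N →₀ ℕ // d.degree = 2} = (N + 1).choose 2 := by
  rw [Fintype.card_congr (auxDegTwoEquiv N), Sym.card_sym_eq_choose, Fintype.card_fin,
    show N + 2 - 1 = N + 1 from rfl]

lemma aux_finrank_hs2 (F : Type*) [Field F] (N : ℕ) :
    Module.finrank F (MvPolynomial.homogeneousSubmodule (Fin N) F 2) = (N + 1).choose 2 := by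
  letI : Fintype ↥{d : Fin N →₀ ℕ | d.degree = 2} := auxDegTwoFintype N
  have h := MvPolynomial.homogeneousSubmodule_eq_finsupp_supported F (σ := Fin N) 2
  let e1 : MvPolynomial.homogeneousSubmodule (Fin N) F 2 ≃ₗ[F]
      (AddMonoidAlgebra.supported F F { d : Fin N →₀ ℕ | d.degree = 2 } :
        Submodule F (MvPolynomial (Fin N) F)) := LinearEquiv.ofEq _ _ h
  let e2 := AddMonoidAlgebra.supportedEquivFinsupp (S := F) (R := F) { d : Fin N →₀ ℕ | d.degree = 2 }
  have hfr := (e1.trans e2).finrank_eq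
  rw [hfr, Module.finrank_eq_card_basis (Finsupp.basisSingleOne (R := F))]
  exact aux_card_degree_two N

lemma aux_findim_hs2 (F : Type*) [Field F] (N : ℕ) :
    FiniteDimensional F (MvPolynomial.homogeneousSubmodule (Fin N) F 2) := by
  letI : Fintype ↥{d : Fin N →₀ ℕ | d.degree = 2} := auxDegTwoFintype N
  have h := MvPolynomial.homogeneousSubmodule_eq_finsupp_supported F (σ := Fin N) 2
  let e1 : MvPolynomial.homogeneousSubmodule (Fin N) F 2 ≃ₗ[F]
      (AddMonoidAlgebra.supported F F { d : Fin N →₀ ℕ | d.degree = 2 } :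
        Submodule F (MvPolynomial (Fin N) F)) := LinearEquiv.ofEq _ _ h
  let e2 := AddMonoidAlgebra.supportedEquivFinsupp (S := F) (R := F) { d : Fin N →₀ ℕ | d.degree = 2 }
  exact Module.Finite.equiv (e1.trans e2).symm

theorem stmt_9 (p k q : ℕ) (hp : p.Prime) (hk : 1 ≤ k) (hq : q = p ^ k)
    (F : Type*) [Field F] [CharP F p]
    (f : F[X]) (m : ℕ) (hm : m = f.natDegree) (hm2 : 2 ≤ m) (hmp : Nat.Coprime m p) (hm3 : 3 ≤ m) (hdvd : m ∣ q - 1)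
    (c : ℕ) (hc : c = (q - 1) / m)
    (v : Fin (c + 2) → ASRing F q f)
    (hv0 : v 0 = 1) (hv1 : v 1 = ASx F q f)
    (hvu : ∀ u : ℕ, 1 ≤ u → u ≤ c → v (Fin.ofNat (c + 2) (1 + u)) = ASy F q f ^ u) :
    Submodule.map (MvPolynomial.aeval v).toLinearMap
        (MvPolynomial.homogeneousSubmodule (Fin (c + 2)) F 2) =
      Lspace F q f m (2 * q) ∧
    Module.finrank F
        (LinearMap.ker ((MvPolynomial.aeval (R := F) v).toLinearMap.domRestrict
          (MvPolynomial.homogeneousSubmodule (Fin (c + 2)) F 2))) =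
      Nat.choose (c + 3) 2 - (3 * c + 3) := by
  classical
  -- basic arithmetic
  have hq2 : 2 ≤ q := by
    rw [hq]
    calc 2 ≤ p := hp.two_le
    _ = p ^ 1 := (pow_one p).symm
    _ ≤ p ^ k := Nat.pow_le_pow_right hp.pos hk
  have hmc : m * c = q - 1 := by rw [hc]; exact Nat.mul_div_cancel' hdvd
  have hq1 : 1 ≤ q - 1 := by omega
  have hmq1 : m ≤ q - 1 := Nat.le_of_dvd (by omega) hdvd
  have hcpos : 1 ≤ c := by
    rcases Nat.eq_zero_or_pos c with h | h
    · rw [h, Nat.mul_zero] at hmc; omega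
    · exact h
  have h2c : 2 * c ≤ q - 1 := by
    calc 2 * c ≤ m * c := Nat.mul_le_mul_right c (by omega)
    _ = q - 1 := hmc
  have hcq : c ≤ q - 1 := by omega
  set x := ASx F q f with hx
  set y := ASy F q f with hy
  -- the finite set of exponent pairs
  set T : Finset (ℕ × ℕ) :=
    ((Finset.range (2 * c + 1)).image fun j => ((0 : ℕ), j)) ∪
      ((Finset.range (c + 1)).image fun j => ((1 : ℕ), j)) ∪ {((2 : ℕ), (0 : ℕ))} with hT
  set gf : ℕ × ℕ → ASRing F q f := fun t => x ^ t.1 * y ^ t.2 with hgf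
  have hmemT : ∀ i j : ℕ, ((i, j) ∈ T) ↔
      (i = 0 ∧ j ≤ 2 * c) ∨ (i = 1 ∧ j ≤ c) ∨ (i = 2 ∧ j = 0) := by
    intro i j
    simp only [hT, Finset.mem_union, Finset.mem_image, Finset.mem_range, Finset.mem_singleton,
      Prod.mk.injEq, Prod.ext_iff]
    constructor
    · rintro ((⟨j', hj', h0, rfl⟩ | ⟨j', hj', h1, rfl⟩) | ⟨h2, h0⟩) <;> omega
    · rintro (⟨rfl, hj⟩ | ⟨rfl, hj⟩ | ⟨rfl, rfl⟩)
      · exact Or.inl (Or.inl ⟨j, by omega, rfl, rfl⟩)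
      · exact Or.inl (Or.inr ⟨j, by omega, rfl, rfl⟩)
      · exact Or.inr ⟨rfl, rfl⟩
  -- description of the values of `v`
  have hvcases : ∀ a : Fin (c + 2), v a = 1 ∨ v a = x ∨ ∃ u, 1 ≤ u ∧ u ≤ c ∧ v a = y ^ u := by
    intro a
    have hlt := a.isLt
    rcases show (a : ℕ) = 0 ∨ (a : ℕ) = 1 ∨ (2 ≤ (a : ℕ) ∧ (a : ℕ) ≤ c + 1) by omega with
      h | h | ⟨h1, h2⟩
    · left; rw [show a = 0 by apply Fin.ext; simpa using h]; exact hv0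
    · right; left; rw [show a = 1 by apply Fin.ext; simpa using h]; exact hv1
    · right; right
      refine ⟨(a : ℕ) - 1, by omega, by omega, ?_⟩
      conv_lhs => rw [show a = Fin.ofNat (c + 2) (1 + ((a : ℕ) - 1)) by
        apply Fin.ext
        rw [Fin.val_ofNat, Nat.mod_eq_of_lt (by omega)]
        omega]
      exact hvu ((a : ℕ) - 1) (by omega) (by omega)
  -- every product of two coordinates is one of the monomials from `T`
  have hprod : ∀ a b : Fin (c + 2), ∃ t ∈ T, v a * v b = gf t := by
    intro a b
    rcases hvcases a with ha | ha | ⟨u, hu1, hu2, ha⟩ <;>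
      rcases hvcases b with hb | hb | ⟨w, hw1, hw2, hb⟩
    · exact ⟨(0, 0), (hmemT 0 0).mpr (by omega), by rw [ha, hb]; simp [hgf]⟩
    · exact ⟨(1, 0), (hmemT 1 0).mpr (by omega), by rw [ha, hb]; simp [hgf]⟩
    · exact ⟨(0, w), (hmemT 0 w).mpr (by omega), by rw [ha, hb]; simp [hgf]⟩
    · exact ⟨(1, 0), (hmemT 1 0).mpr (by omega), by rw [ha, hb]; simp [hgf]⟩
    · exact ⟨(2, 0), (hmemT 2 0).mpr (by omega), by rw [ha, hb]; simp [hgf]; ring⟩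
    · exact ⟨(1, w), (hmemT 1 w).mpr (by omega), by rw [ha, hb]; simp [hgf]⟩
    · exact ⟨(0, u), (hmemT 0 u).mpr (by omega), by rw [ha, hb]; simp [hgf]⟩
    · exact ⟨(1, u), (hmemT 1 u).mpr (by omega), by rw [ha, hb]; simp [hgf]; ring⟩
    · exact ⟨(0, u + w), (hmemT 0 (u + w)).mpr (by omega), by
        rw [ha, hb]; simp [hgf]; rw [pow_add]⟩
  -- every monomial from `T` is a product of two coordinates
  have hTrep : ∀ t ∈ T, ∃ a b : Fin (c + 2), gf t = v a * v b := by
    rintro ⟨i, j⟩ ht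
    rw [hmemT] at ht
    rcases ht with ⟨rfl, hj⟩ | ⟨rfl, hj⟩ | ⟨rfl, rfl⟩
    · rcases show j = 0 ∨ (1 ≤ j ∧ j ≤ c) ∨ (c < j ∧ j ≤ 2 * c) by omega with
        h | ⟨h1, h2⟩ | ⟨h1, h2⟩
      · exact ⟨0, 0, by rw [hv0, h]; simp [hgf]⟩
      · exact ⟨0, Fin.ofNat (c + 2) (1 + j), by rw [hv0, hvu j h1 h2]; simp [hgf]⟩
      · refine ⟨Fin.ofNat (c + 2) (1 + c), Fin.ofNat (c + 2) (1 + (j - c)), ?_⟩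
        rw [hvu c hcpos le_rfl, hvu (j - c) (by omega) (by omega), ← pow_add,
          show c + (j - c) = j by omega]
        simp [hgf]
    · rcases Nat.eq_zero_or_pos j with h | h
      · exact ⟨1, 0, by rw [hv0, hv1, h]; simp [hgf]⟩
      · exact ⟨1, Fin.ofNat (c + 2) (1 + j), by rw [hv1, hvu j h hj]; simp [hgf]⟩
    · exact ⟨1, 1, by rw [hv1]; simp [hgf]; ring⟩
  -- the generating set of `Lspace` is exactly the image of `T`
  have hsetEq : {r | ∃ i j : ℕ, j ≤ q - 1 ∧ q * i + m * j ≤ 2 * q ∧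
      r = x ^ i * y ^ j} = gf '' ↑T := by
    ext r
    constructor
    · rintro ⟨i, j, hj, hle, rfl⟩
      refine ⟨(i, j), ?_, rfl⟩
      rw [Finset.mem_coe, hmemT]
      have hi2 : i ≤ 2 := by
        by_contra h
        push_neg at h
        have h3 : q * 3 ≤ q * i := Nat.mul_le_mul_left q (by omega)
        omega
      interval_cases i
      · left
        refine ⟨rfl, ?_⟩
        by_contra h
        push_neg at h
        have : m * (2 * c + 1) ≤ m * j := Nat.mul_le_mul_left m (by omega)
        have : m * (2 * c + 1) = 2 * (m * c) + m := by ring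
        omega
      · right; left
        refine ⟨rfl, ?_⟩
        by_contra h
        push_neg at h
        have : m * (c + 1) ≤ m * j := Nat.mul_le_mul_left m (by omega)
        have : m * (c + 1) = m * c + m := by ring
        omega
      · right; right
        refine ⟨rfl, ?_⟩
        have hmj : m * j ≤ 0 := by omega
        rcases Nat.eq_zero_or_pos j with h | h
        · exact h
        · have : m * 1 ≤ m * j := Nat.mul_le_mul_left m h
          omega
    · rintro ⟨⟨i, j⟩, hmem, rfl⟩
      rw [Finset.mem_coe, hmemT] at hmem
      rcases hmem with ⟨rfl, hj⟩ | ⟨rfl, hj⟩ | ⟨rfl, rfl⟩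
      · refine ⟨0, j, by omega, ?_, rfl⟩
        have : m * j ≤ m * (2 * c) := Nat.mul_le_mul_left m hj
        have : m * (2 * c) = 2 * (m * c) := by ring
        omega
      · refine ⟨1, j, by omega, ?_, rfl⟩
        have : m * j ≤ m * c := Nat.mul_le_mul_left m hj
        omega
      · exact ⟨2, 0, by omega, by omega, rfl⟩
  have hLs : Lspace F q f m (2 * q) = Submodule.span F (gf '' ↑T) := by
    rw [Lspace, ← hx, ← hy, hsetEq]
  -- the image of the degree-2 homogeneous polynomials is the span of the image of `T`
  have hmap : Submodule.map (MvPolynomial.aeval v).toLinearMap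
      (MvPolynomial.homogeneousSubmodule (Fin (c + 2)) F 2) =
      Submodule.span F (gf '' ↑T) := by
    apply le_antisymm
    · rw [Submodule.map_le_iff_le_comap]
      intro P hP
      have hsupp : ∀ d ∈ P.support, Finsupp.degree d = 2 := by
        intro d hd
        have h1 := (MvPolynomial.homogeneousSubmodule_eq_finsupp_supported F
          (σ := Fin (c + 2)) 2) ▸ hP
        exact h1 hd
      rw [Submodule.mem_comap, ← MvPolynomial.support_sum_monomial_coeff P, map_sum]
      apply Submodule.sum_mem
      intro d hd
      obtain ⟨a, b, rfl⟩ := aux_degree_two_decomp d (hsupp d hd)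
      have heval : (MvPolynomial.aeval v)
          (MvPolynomial.monomial (Finsupp.single a 1 + Finsupp.single b 1)
            (MvPolynomial.coeff (Finsupp.single a 1 + Finsupp.single b 1) P)) =
          (MvPolynomial.coeff (Finsupp.single a 1 + Finsupp.single b 1) P) • (v a * v b) := by
        rw [MvPolynomial.aeval_monomial,
          Finsupp.prod_add_index (fun i _ => pow_zero (v i)) (fun i _ e e' => pow_add (v i) e e'),
          Finsupp.prod_single_index (h := fun i (e : ℕ) => v i ^ e) (pow_zero (v a)),
          Finsupp.prod_single_index (h := fun i (e : ℕ) => v i ^ e) (pow_zero (v b)),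
          pow_one, pow_one, Algebra.smul_def]
      rw [AlgHom.toLinearMap_apply, heval]
      obtain ⟨t, ht, hvt⟩ := hprod a b
      rw [hvt]
      exact Submodule.smul_mem _ _ (Submodule.subset_span ⟨t, ht, rfl⟩)
    · rw [Submodule.span_le]
      rintro r ⟨t, ht, rfl⟩
      obtain ⟨a, b, heq⟩ := hTrep t (Finset.mem_coe.mp ht)
      refine ⟨MvPolynomial.X a * MvPolynomial.X b, ?_, ?_⟩
      · exact (MvPolynomial.mem_homogeneousSubmodule _ _).mpr
          ((MvPolynomial.isHomogeneous_X F a).mul (MvPolynomial.isHomogeneous_X F b))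
      · rw [AlgHom.toLinearMap_apply, map_mul, MvPolynomial.aeval_X, MvPolynomial.aeval_X]
        exact heq.symm
  refine ⟨hmap.trans hLs.symm, ?_⟩
  -- set up the basis of `R` over `F`
  have hd : ((X : (F[X])[X]) - C f).degree < (q : ℕ) := by
    apply lt_of_le_of_lt (Polynomial.degree_sub_le _ _)
    simp only [Polynomial.degree_X]
    apply max_lt
    · exact_mod_cast by omega
    · exact lt_of_le_of_lt Polynomial.degree_C_le (by exact_mod_cast by omega)
  have heqg : ((X : (F[X])[X]) ^ q + X - C f) = X ^ q + (X - C f) := by ring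
  have hgmonic : ((X : (F[X])[X]) ^ q + X - C f).Monic := by
    rw [heqg]; exact Polynomial.monic_X_pow_add hd
  have hgdeg : ((X : (F[X])[X]) ^ q + X - C f).natDegree = q := by
    rw [heqg]
    have hlt : ((X : (F[X])[X]) - C f).degree < ((X : (F[X])[X]) ^ q).degree := by
      rwa [Polynomial.degree_X_pow]
    rw [natDegree_eq_of_degree_eq (Polynomial.degree_add_eq_left_of_degree_lt hlt),
      Polynomial.natDegree_X_pow]
  let pb := AdjoinRoot.powerBasis' hgmonic
  have hdim : pb.dim = q := hgdeg
  let B : Module.Basis (ℕ × Fin pb.dim) F (ASRing F q f) :=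
    (Polynomial.basisMonomials F).smulTower pb.basis
  have hB : ∀ (n : ℕ) (j : Fin pb.dim), B (n, j) = x ^ n * y ^ (j : ℕ) := by
    intro n j
    simp only [hx, hy, ASx, ASy]
    rw [show B (n, j) = (Polynomial.basisMonomials F) n • pb.basis j from
      Module.Basis.smulTower_apply _ _ _]
    rw [Polynomial.coe_basisMonomials]
    rw [pb.basis_eq_pow, AdjoinRoot.powerBasis'_gen]
    rw [Algebra.smul_def, AdjoinRoot.algebraMap_eq]
    simp only [← map_pow, Polynomial.X_pow_eq_monomial]
  -- the second components of elements of `T` are `< q`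
  have hTj : ∀ t ∈ T, t.2 < pb.dim := by
    rintro ⟨i, j⟩ ht
    rw [hmemT] at ht
    rw [hdim]
    omega
  -- linear independence of the monomials from `T`
  let e : ↥T → ℕ × Fin pb.dim := fun t => ((t : ℕ × ℕ).1, ⟨(t : ℕ × ℕ).2, hTj t t.2⟩)
  have heinj : Function.Injective e := by
    rintro ⟨⟨i, j⟩, ht⟩ ⟨⟨i', j'⟩, ht'⟩ h
    simp only [e, Prod.mk.injEq, Fin.mk.injEq] at h
    exact Subtype.ext (Prod.ext h.1 h.2)
  have hli : LinearIndependent F (fun t : ↥T => gf ↑t) := by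
    have h1 := B.linearIndependent.comp e heinj
    have h2 : (B ∘ e) = fun t : ↥T => gf ↑t := by
      funext t
      rw [Function.comp_apply, show e t = ((t : ℕ × ℕ).1, ⟨(t : ℕ × ℕ).2, hTj t t.2⟩) from rfl,
        hB]
    rwa [h2] at h1
  have hcardT : T.card = 3 * c + 3 := by
    rw [hT]
    rw [Finset.card_union_of_disjoint, Finset.card_union_of_disjoint]
    · rw [Finset.card_image_of_injective _ (fun a b h => by simpa using h),
        Finset.card_image_of_injective _ (fun a b h => by simpa using h),
        Finset.card_range, Finset.card_range, Finset.card_singleton]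
      omega
    all_goals
      rw [Finset.disjoint_left]
      rintro ⟨i, j⟩ hmem h2
      simp only [Finset.mem_union, Finset.mem_image, Finset.mem_range,
        Finset.mem_singleton, Prod.mk.injEq] at hmem h2
      first
        | (obtain ⟨rfl, rfl⟩ := h2
           rcases hmem with ⟨j', _, h1, _⟩ | ⟨j', _, h1, _⟩ <;> omega)
        | (obtain ⟨j', _, h1, _⟩ := hmem
           obtain ⟨j'', _, h1', _⟩ := h2
           omega)
  have himg : gf '' ↑T = Set.range (fun t : ↥T => gf ↑t) := by
    ext r
    constructor
    · rintro ⟨t, ht, rfl⟩; exact ⟨⟨t, ht⟩, rfl⟩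
    · rintro ⟨⟨t, ht⟩, rfl⟩; exact ⟨t, ht, rfl⟩
  have hrank : Module.finrank F (Submodule.span F (gf '' ↑T)) = 3 * c + 3 := by
    rw [himg, finrank_span_eq_card hli, Fintype.card_coe, hcardT]
  -- rank-nullity
  haveI := aux_findim_hs2 F (c + 2)
  have hrn := LinearMap.finrank_range_add_finrank_ker
    ((MvPolynomial.aeval (R := F) v).toLinearMap.domRestrict
      (MvPolynomial.homogeneousSubmodule (Fin (c + 2)) F 2))
  rw [LinearMap.range_domRestrict] at hrn
  rw [hmap] at hrn
  rw [hrank] at hrn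
  rw [aux_finrank_hs2 F (c + 2)] at hrn
  rw [show c + 2 + 1 = c + 3 by omega] at hrn
  omega
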